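/- Let A = π·[[0,-λ],[λ,0]] with λ a positive integer, and B = π·[[a,b],[c,-a]] a traceless real matrix whose eigenvalues are ±iπμ with μ a positive integer (i.e., −a² − bc = μ²). Then exp(A)·exp(B) = exp(B)·exp(A). -/

import Mathlib

open Matrix NormedSpace

lemma key_exp (m : ℕ) (hm : 0 < m) (a b c : ℂ) (hb : b ≠ 0)
    (heig : -a^2 - b*c = (m : ℂ)^2) :
    exp ((Real.pi : ℂ) • !![a, b; c, -a]) = ((-1 : ℂ)^m) • (1 : Matrix (Fin 2) (Fin 2) ℂ) := by
  obtain ⟨P, hP⟩ : ∃ P : Matrix (Fin 2) (Fin 2) ℂ,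
      P = !![b, b; Complex.I * m - a, -(Complex.I * m) - a] := ⟨_, rfl⟩
  obtain ⟨D, hD⟩ : ∃ D : Matrix (Fin 2) (Fin 2) ℂ,
      D = diagonal ![(Real.pi : ℂ) * m * Complex.I, -((Real.pi : ℂ) * m * Complex.I)] := ⟨_, rfl⟩
  have hm0 : (m : ℂ) ≠ 0 := Nat.cast_ne_zero.mpr hm.ne'
  have hdet : P.det = -2 * Complex.I * m * b := by
    simp [hP, Matrix.det_fin_two_of]; ring
  have hdetu : IsUnit P.det := by
    rw [hdet]
    exact (by simp [Complex.I_ne_zero, hm0, hb] : (-2 * Complex.I * (m:ℂ) * b) ≠ 0).isUnit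
  have hMP : ((Real.pi : ℂ) • !![a, b; c, -a]) * P = P * D := by
    ext i j
    fin_cases i <;> fin_cases j <;>
      simp [hP, hD, Matrix.mul_apply, Fin.sum_univ_two, Matrix.diagonal]
    · first
      | ring1
      | linear_combination (-(Real.pi:ℂ)) * heig - (Real.pi:ℂ) * (m:ℂ)^2 * Complex.I_sq
      | linear_combination (-2*(Real.pi:ℂ)) * heig - 2*(Real.pi:ℂ) * (m:ℂ)^2 * Complex.I_sq
    · first
      | ring1
      | linear_combination (-(Real.pi:ℂ)) * heig - (Real.pi:ℂ) * (m:ℂ)^2 * Complex.I_sq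
      | linear_combination (-2*(Real.pi:ℂ)) * heig - 2*(Real.pi:ℂ) * (m:ℂ)^2 * Complex.I_sq
    · first
      | ring1
      | linear_combination (-(Real.pi:ℂ)) * heig - (Real.pi:ℂ) * (m:ℂ)^2 * Complex.I_sq
      | linear_combination (-2*(Real.pi:ℂ)) * heig - 2*(Real.pi:ℂ) * (m:ℂ)^2 * Complex.I_sq
    · first
      | ring1
      | linear_combination (-(Real.pi:ℂ)) * heig - (Real.pi:ℂ) * (m:ℂ)^2 * Complex.I_sq
      | linear_combination (-2*(Real.pi:ℂ)) * heig - 2*(Real.pi:ℂ) * (m:ℂ)^2 * Complex.I_sq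
  have hM : (Real.pi : ℂ) • !![a, b; c, -a] = P * D * P⁻¹ := by
    rw [← hMP, Matrix.mul_nonsing_inv_cancel_right _ _ hdetu]
  rw [hM, Matrix.exp_conj _ _ (Matrix.isUnit_iff_isUnit_det P |>.mpr hdetu)]
  have e1 : Complex.exp ((Real.pi : ℂ) * m * Complex.I) = (-1 : ℂ)^m := by
    have : (Real.pi : ℂ) * m * Complex.I = m * (Real.pi * Complex.I) := by ring
    rw [this, Complex.exp_nat_mul, Complex.exp_pi_mul_I]
  have hexpD : exp D = ((-1 : ℂ)^m) • (1 : Matrix (Fin 2) (Fin 2) ℂ) := by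
    rw [hD, Matrix.exp_diagonal]
    have h1 : NormedSpace.exp ((Real.pi : ℂ) * m * Complex.I) = (-1 : ℂ)^m := by
      rw [← Complex.exp_eq_exp_ℂ]; exact e1
    have h2 : NormedSpace.exp (-((Real.pi : ℂ) * m * Complex.I)) = (-1 : ℂ)^m := by
      rw [← Complex.exp_eq_exp_ℂ, Complex.exp_neg, e1, ← inv_pow]
      norm_num
    ext i j
    fin_cases i <;> fin_cases j <;>
      simp [Matrix.diagonal, Pi.exp_def, h1, h2]
  rw [hexpD, mul_smul_comm, smul_mul_assoc, Matrix.mul_one,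
    Matrix.mul_nonsing_inv _ hdetu]

theorem stmt_7 (lam mu : ℕ) (hlam : 0 < lam) (hmu : 0 < mu) (a b c : ℝ)
    (heig : -a^2 - b*c = (mu : ℝ)^2) :
    let A : Matrix (Fin 2) (Fin 2) ℂ := (Real.pi : ℂ) • !![0, -(lam : ℂ); (lam : ℂ), 0]
    let B : Matrix (Fin 2) (Fin 2) ℂ := (Real.pi : ℂ) • !![(a : ℂ), (b : ℂ); (c : ℂ), -(a : ℂ)]
    exp A * exp B = exp B * exp A := by
  intro A B
  have hAdef : A = (Real.pi : ℂ) • !![0, -(lam : ℂ); (lam : ℂ), 0] := rfl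
  have hBdef : B = (Real.pi : ℂ) • !![(a : ℂ), (b : ℂ); (c : ℂ), -(a : ℂ)] := rfl
  have hb : (b : ℂ) ≠ 0 := by
    have hbc : b * c < 0 := by nlinarith [sq_nonneg a, (by exact_mod_cast hmu : (1:ℝ) ≤ mu)]
    exact_mod_cast (by rintro rfl; simp at hbc : b ≠ 0)
  have hA : exp A = ((-1 : ℂ)^lam) • (1 : Matrix (Fin 2) (Fin 2) ℂ) := by
    have h := key_exp lam hlam 0 (-(lam:ℂ)) (lam:ℂ)
      (neg_ne_zero.mpr (Nat.cast_ne_zero.mpr hlam.ne')) (by ring)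
    rw [neg_zero] at h
    rw [hAdef, h]
  have hB : exp B = ((-1 : ℂ)^mu) • (1 : Matrix (Fin 2) (Fin 2) ℂ) := by
    have heigC : -(a:ℂ)^2 - (b:ℂ)*(c:ℂ) = (mu : ℂ)^2 := by exact_mod_cast heig
    rw [hBdef]; exact key_exp mu hmu a b c hb heigC
  rw [hA, hB, smul_mul_smul_comm, smul_mul_smul_comm, mul_comm ((-1:ℂ)^lam)]
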